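/- Consider the IFS on X = [0,1] with Λ = {0,1}, ω_0(x) = x/2, and ω_1(x) = min(2x, 1). Let p be the probability on Λ with p({0}) = p({1}) = 1/2 and ℙ = p^ℕ the Bernoulli measure on Ω = {0,1}^ℕ. Then ℙ(G) = 0, where G = {σ ∈ Ω : lim_{n→∞} diam(ω_{σ_n} ∘ ⋯ ∘ ω_{σ_1}([0,1])) = 0}. -/

import Mathlib

open Metric Set Filter MeasureTheory

def fcomp {Λ X : Type*} (ω : Λ → X → X) (σ : ℕ → Λ) : ℕ → X → X
  | 0 => id
  | n + 1 => ω (σ n) ∘ fcomp ω σ n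

def IsBernoulli {Λ : Type*} [MeasurableSpace Λ]
    (p : Measure Λ) (P : Measure (ℕ → Λ)) : Prop :=
  IsProbabilityMeasure P ∧
    ∀ (n : ℕ) (A : ℕ → Set Λ), (∀ i, MeasurableSet (A i)) →
      P {σ | ∀ i < n, σ i ∈ A i} = ∏ i ∈ Finset.range n, p (A i)

/-- `ω_0(x) = x / 2` on `[0,1]`. -/
noncomputable def w0 (x : Set.Icc (0:ℝ) 1) : Set.Icc (0:ℝ) 1 :=
  ⟨(x : ℝ) / 2, ⟨by have := x.2.1; linarith, by have := x.2.2; linarith⟩⟩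

/-- `ω_1(x) = min (2x) 1` on `[0,1]`. -/
noncomputable def w1 (x : Set.Icc (0:ℝ) 1) : Set.Icc (0:ℝ) 1 :=
  ⟨min (2 * (x : ℝ)) 1,
    ⟨le_min (by have := x.2.1; linarith) zero_le_one, min_le_right _ _⟩⟩

/-- The IFS with parameter space `{0, 1}` (encoded by `Bool`). -/
noncomputable def wmap : Bool → Set.Icc (0:ℝ) 1 → Set.Icc (0:ℝ) 1
  | false => w0
  | true => w1

/-- The set `G` where `diam (ω_{σ_n} ∘ ⋯ ∘ ω_{σ_1}([0,1])) → 0`. -/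
def Gset : Set (ℕ → Bool) :=
  {σ | Tendsto (fun n => Metric.diam (Set.range (fcomp wmap σ n))) atTop (nhds 0)}


open ENNReal
namespace Stmt15Aux


/-! ### The random walk -/

def stepv (b : Bool) : ℤ := if b then -1 else 1

def Sv (σ : ℕ → Bool) (n : ℕ) : ℤ := ∑ i ∈ Finset.range n, stepv (σ i)

def shf (σ : ℕ → Bool) : ℕ → Bool := fun n => σ (n + 1)

def Bm (m : ℕ) : Set (ℕ → Bool) := {σ | ∀ n, -(m : ℤ) ≤ Sv σ n}

lemma measurable_shf : Measurable shf :=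
  measurable_pi_lambda _ fun n => measurable_pi_apply (n + 1)

lemma measurable_Sv (n : ℕ) : Measurable fun σ => Sv σ n := by
  apply Finset.measurable_sum
  intro i _
  exact (measurable_of_countable stepv).comp (measurable_pi_apply i)

lemma measurableSet_Bm (m : ℕ) : MeasurableSet (Bm m) := by
  have : Bm m = ⋂ n, (fun σ => Sv σ n) ⁻¹' (Ici (-(m:ℤ))) := by
    ext σ; simp [Bm]
  rw [this]
  exact MeasurableSet.iInter fun n => (measurable_Sv n) measurableSet_Ici

lemma Sv_succ' (σ : ℕ → Bool) (n : ℕ) :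
    Sv σ (n + 1) = Sv (shf σ) n + stepv (σ 0) := by
  simpa [Sv, shf] using Finset.sum_range_succ' (fun i => stepv (σ i)) n

lemma Bm_zero : Bm 0 = {σ | σ 0 = false} ∩ shf ⁻¹' Bm 1 := by
  ext σ
  constructor
  · intro h
    have h1 := h 1
    rw [Sv_succ'] at h1
    simp [Sv] at h1
    rcases hb : σ 0 with _ | _
    · refine ⟨hb, fun n => ?_⟩
      have := h (n + 1)
      rw [Sv_succ', hb] at this
      simp [stepv] at this ⊢
      linarith
    · exfalso; rw [hb] at h1; simp [stepv] at h1
  · rintro ⟨h0, h1⟩ n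
    cases n with
    | zero => simp [Sv]
    | succ n =>
      rw [Sv_succ', h0]
      have := h1 n
      simp [stepv] at this ⊢
      linarith

lemma Bm_succ (m : ℕ) : Bm (m + 1) =
    ({σ | σ 0 = false} ∩ shf ⁻¹' Bm (m + 2)) ∪ ({σ | σ 0 = true} ∩ shf ⁻¹' Bm m) := by
  ext σ
  constructor
  · intro h
    rcases hb : σ 0 with _ | _
    · left
      refine ⟨hb, fun n => ?_⟩
      have := h (n + 1)
      rw [Sv_succ', hb] at this
      simp [stepv] at this ⊢
      push_cast
      linarith
    · right
      refine ⟨hb, fun n => ?_⟩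
      have := h (n + 1)
      rw [Sv_succ', hb] at this
      simp [stepv] at this ⊢
      push_cast at this ⊢
      linarith
  · rintro (⟨h0, h1⟩ | ⟨h0, h1⟩) n
    · cases n with
      | zero => simp [Sv]
      | succ n =>
        rw [Sv_succ', h0]
        have := h1 n
        simp [stepv] at this ⊢
        push_cast at this ⊢
        linarith
    · cases n with
      | zero => simp [Sv]
      | succ n =>
        rw [Sv_succ', h0]
        have := h1 n
        simp [stepv] at this ⊢
        push_cast at this ⊢
        linarith



def pre (n : ℕ) (σ : ℕ → Bool) : Fin n → Bool := fun i => σ i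

lemma measurable_pre (n : ℕ) : Measurable (pre n) :=
  measurable_pi_lambda _ fun i => measurable_pi_apply (i : ℕ)

lemma measSet_fin {n : ℕ} (F : Set (Fin n → Bool)) : MeasurableSet F :=
  F.toFinite.measurableSet



lemma measurableSet_eq0 (b : Bool) : MeasurableSet {σ : ℕ → Bool | σ 0 = b} := by
  have : {σ : ℕ → Bool | σ 0 = b} = (fun σ : ℕ → Bool => σ 0) ⁻¹' {b} := rfl
  rw [this]
  exact measurable_pi_apply 0 (measurableSet_singleton b)

section withP

variable (p : Measure Bool) [IsProbabilityMeasure p]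
    (hp : ∀ b : Bool, p {b} = 1 / 2)
    (P : Measure (ℕ → Bool)) (hP : IsBernoulli p P)

include hp hP

lemma point_cyl (n : ℕ) (w : Fin n → Bool) :
    P (pre n ⁻¹' {w}) = (2 : ℝ≥0∞)⁻¹ ^ n := by
  classical
  have h := hP.2 n (fun i => if h : i < n then {w ⟨i, h⟩} else univ)
    (fun i => by by_cases h : i < n <;> simp [h])
  have hset : {σ : ℕ → Bool | ∀ i < n, σ i ∈ (fun i =>
      if h : i < n then ({w ⟨i, h⟩} : Set Bool) else univ) i} = pre n ⁻¹' {w} := by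
    ext σ
    simp only [mem_setOf_eq, mem_preimage, mem_singleton_iff, pre]
    constructor
    · intro h'
      funext i
      have := h' i i.2
      simpa [i.2, pre] using this
    · intro h' i hi
      simp only [hi, dif_pos, mem_singleton_iff]
      rw [← h']
      rfl
  rw [hset] at h
  rw [h]
  rw [Finset.prod_congr rfl (fun i hi => ?_), Finset.prod_const, Finset.card_range]
  · simp only [Finset.mem_range] at hi
    simp only [hi, dif_pos]
    rw [hp, one_div]


lemma master (n : ℕ) (F : Set (Fin n → Bool)) :
    P (pre n ⁻¹' F) = (Nat.card F : ℝ≥0∞) * (2 : ℝ≥0∞)⁻¹ ^ n := by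
  classical
  have hF : F.Finite := F.toFinite
  have hdecomp : pre n ⁻¹' F = ⋃ w ∈ hF.toFinset, pre n ⁻¹' {w} := by
    ext σ
    simp only [mem_preimage, mem_iUnion, Set.Finite.mem_toFinset, mem_singleton_iff,
      exists_prop]
    exact ⟨fun h => ⟨pre n σ, h, rfl⟩, fun ⟨w, hw, he⟩ => he ▸ hw⟩
  rw [hdecomp, measure_biUnion_finset ?_ (fun w _ => (measurable_pre n) (measSet_fin {w}))]
  · rw [Finset.sum_congr rfl (fun w _ => point_cyl p hp P hP n w), Finset.sum_const]
    simp only [nsmul_eq_mul]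
    congr 1
    rw [Nat.card_eq_card_finite_toFinset hF]
  · intro w _ v _ hwv
    exact Set.disjoint_iff_inter_eq_empty.2 (by
      rw [← Set.preimage_inter]
      rw [Set.singleton_inter_eq_empty.2 (by simpa using hwv)]
      simp)

omit [IsProbabilityMeasure p] hp hP in
lemma ext_cyl (μ ν : Measure (ℕ → Bool)) [IsFiniteMeasure μ] [IsFiniteMeasure ν]
    (h : ∀ n (F : Set (Fin n → Bool)), μ (pre n ⁻¹' F) = ν (pre n ⁻¹' F)) : μ = ν := by
  refine ext_of_generate_finite _ generateFrom_measurableCylinders.symm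
    isPiSystem_measurableCylinders ?_ ?_
  · intro s hs
    obtain ⟨I, S, _, rfl⟩ := (mem_measurableCylinders s).1 hs
    obtain ⟨n, hn⟩ : ∃ n, ∀ i ∈ I, i < n :=
      ⟨I.sup id + 1, fun i hi => Nat.lt_succ_of_le (Finset.le_sup (f := id) hi)⟩
    have hcyl : cylinder I S =
        pre n ⁻¹' {w : Fin n → Bool | (fun i : I => w ⟨i.1, hn i.1 i.2⟩) ∈ S} := by
      ext σ
      simp only [mem_cylinder, mem_preimage, mem_setOf_eq]
      rfl
    rw [hcyl]; exact h n _
  · have := h 0 univ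
    simpa using this


lemma markov (b : Bool) (E : Set (ℕ → Bool)) (hE : MeasurableSet E) :
    P ({σ | σ 0 = b} ∩ shf ⁻¹' E) = 2⁻¹ * P E := by
  classical
  set μ := Measure.map shf (P.restrict {σ | σ 0 = b}) with hμ
  haveI : IsProbabilityMeasure P := hP.1
  haveI hfin : IsFiniteMeasure μ := Measure.isFiniteMeasure_map _ _
  haveI hfin2 : IsFiniteMeasure ((2⁻¹ : ℝ≥0∞) • P) := by
    constructor
    rw [Measure.smul_apply, smul_eq_mul, measure_univ]
    simp [ENNReal.inv_lt_one]
  have key : μ = (2⁻¹ : ℝ≥0∞) • P := by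
    apply ext_cyl
    intro n F
    set F' : Set (Fin (n + 1) → Bool) :=
      {w | w 0 = b ∧ (fun i : Fin n => w i.succ) ∈ F} with hF'
    have h1 : μ (pre n ⁻¹' F) = P (pre (n + 1) ⁻¹' F') := by
      rw [hμ, Measure.map_apply measurable_shf ((measurable_pre n) (measSet_fin F)),
        Measure.restrict_apply (measurable_shf ((measurable_pre n) (measSet_fin F)))]
      congr 1
      ext σ
      simp only [mem_inter_iff, mem_preimage, mem_setOf_eq, hF', pre, shf]
      exact ⟨fun h => ⟨h.2, h.1⟩, fun h => ⟨h.2, h.1⟩⟩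
    have hcard : Nat.card F' = Nat.card F := by
      have himg : F' = Fin.cons b '' F := by
        ext w
        simp only [hF', mem_setOf_eq, Set.mem_image]
        constructor
        · rintro ⟨h0, ht⟩
          exact ⟨fun i => w i.succ, ht, by rw [← h0]; exact Fin.cons_self_tail w⟩
        · rintro ⟨v, hv, rfl⟩
          refine ⟨Fin.cons_zero _ _, ?_⟩
          have he : (fun i : Fin n => (Fin.cons b v : ∀ _ : Fin (n+1), Bool) i.succ) = v :=
            funext fun i => Fin.cons_succ (α := fun _ : Fin (n+1) => Bool) b v i
          rw [he]
          exact hv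
      rw [himg, Nat.card_image_of_injective (Fin.cons_right_injective (α := fun _ : Fin (n+1) => Bool) b)]
    rw [h1, master p hp P hP, hcard, Measure.smul_apply, smul_eq_mul, master p hp P hP]
    ring
  calc P ({σ | σ 0 = b} ∩ shf ⁻¹' E) = (P.restrict {σ | σ 0 = b}) (shf ⁻¹' E) := by
        rw [Measure.restrict_apply (measurable_shf hE), inter_comm]
      _ = μ E := (Measure.map_apply measurable_shf hE).symm
      _ = 2⁻¹ * P E := by rw [key, Measure.smul_apply, smul_eq_mul]

end withP






def Mw (σ : ℕ → Bool) : ℕ → ℕ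
  | 0 => 0
  | n + 1 => if σ n then Mw σ n - 1 else Mw σ n + 1

def pt1 : Set.Icc (0:ℝ) 1 := ⟨1, by norm_num⟩
def pt0 : Set.Icc (0:ℝ) 1 := ⟨0, by norm_num⟩

noncomputable def tc (σ : ℕ → Bool) (n : ℕ) : ℝ := (fcomp wmap σ n pt1).1

lemma fcomp_pt0 (σ : ℕ → Bool) (n : ℕ) : fcomp wmap σ n pt0 = pt0 := by
  induction n with
  | zero => rfl
  | succ n ih =>
    show wmap (σ n) (fcomp wmap σ n pt0) = pt0
    rw [ih]
    cases σ n
    · apply Subtype.ext; show (pt0 : ℝ) / 2 = 0; simp [pt0]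
    · apply Subtype.ext; show min (2 * (pt0 : ℝ)) 1 = 0; simp [pt0]

lemma tc_nonneg (σ : ℕ → Bool) (n : ℕ) : 0 ≤ tc σ n := (fcomp wmap σ n pt1).2.1

lemma tc_succ (σ : ℕ → Bool) (n : ℕ) :
    tc σ (n + 1) = if σ n then min (2 * tc σ n) 1 else tc σ n / 2 := by
  cases hb : σ n
  · show (wmap (σ n) (fcomp wmap σ n pt1)).1 = _
    rw [hb]; rfl
  · show (wmap (σ n) (fcomp wmap σ n pt1)).1 = _
    rw [hb]; rfl

lemma tc_ge (σ : ℕ → Bool) : ∀ n, (2⁻¹ : ℝ) ^ (Mw σ n) ≤ tc σ n := by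
  intro n
  induction n with
  | zero => simp [tc, Mw, fcomp, pt1]
  | succ n ih =>
    rw [tc_succ]
    cases hb : σ n
    · simp only [if_neg, Bool.false_eq_true]
      show (2⁻¹:ℝ) ^ (Mw σ (n+1)) ≤ tc σ n / 2
      have : Mw σ (n+1) = Mw σ n + 1 := by simp [Mw, hb]
      rw [this, pow_succ]
      have h2 : (0:ℝ) < 2⁻¹ := by norm_num
      nlinarith [ih]
    · simp only [if_pos]
      show (2⁻¹:ℝ) ^ (Mw σ (n+1)) ≤ min (2 * tc σ n) 1
      have hM : Mw σ (n+1) = Mw σ n - 1 := by simp [Mw, hb]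
      refine le_min ?_ ?_
      · rcases Nat.eq_zero_or_pos (Mw σ n) with h0 | hpos
        · rw [hM, h0]
          simp only [Nat.zero_sub, pow_zero]
          have : (1:ℝ) ≤ tc σ n := by
            have := ih; rw [h0, pow_zero] at this; exact this
          linarith
        · obtain ⟨k, hk⟩ := Nat.exists_eq_add_of_le hpos
          have hk' : Mw σ n = k + 1 := by omega
          rw [hM, hk']
          simp only [Nat.add_sub_cancel]
          have := ih
          rw [hk', pow_succ] at this
          nlinarith
      · apply pow_le_one₀ <;> norm_num

lemma diam_ge (σ : ℕ → Bool) (n : ℕ) :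
    tc σ n ≤ Metric.diam (Set.range (fcomp wmap σ n)) := by
  have hbd : Bornology.IsBounded (Set.range (fcomp wmap σ n)) :=
    (isCompact_univ.isBounded).subset (subset_univ _)
  have hd := Metric.dist_le_diam_of_mem hbd (mem_range_self pt1) (mem_range_self pt0)
  rw [fcomp_pt0] at hd
  have : dist (fcomp wmap σ n pt1) pt0 = tc σ n := by
    rw [Subtype.dist_eq, Real.dist_eq]
    show |tc σ n - (0:ℝ)| = tc σ n
    rw [sub_zero, abs_of_nonneg (tc_nonneg σ n)]
  rwa [this] at hd

lemma exists_N {σ : ℕ → Bool} (h : σ ∈ Gset) : ∃ N, ∀ n, N ≤ n → 1 ≤ Mw σ n := by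
  have hev : ∀ᶠ n in atTop, Metric.diam (Set.range (fcomp wmap σ n)) < 2⁻¹ := by
    have : (0:ℝ) < 2⁻¹ := by norm_num
    exact h.eventually_lt_const this
  obtain ⟨N, hN⟩ := eventually_atTop.1 hev
  refine ⟨N, fun n hn => ?_⟩
  by_contra hc
  have h0 : Mw σ n = 0 := by omega
  have := le_trans (tc_ge σ n) (le_trans (diam_ge σ n) (hN n hn).le)
  rw [h0, pow_zero] at this
  norm_num at this

lemma Sv_sum_succ (σ : ℕ → Bool) (n : ℕ) : Sv σ (n + 1) = Sv σ n + stepv (σ n) :=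
  Finset.sum_range_succ _ n

lemma Mw_S (σ : ℕ → Bool) (N : ℕ) (h : ∀ n, N ≤ n → 1 ≤ Mw σ n) :
    ∀ k, (Mw σ (N + k) : ℤ) = (Mw σ N : ℤ) + Sv σ (N + k) - Sv σ N := by
  intro k
  induction k with
  | zero => simp
  | succ k ih =>
    have hs : Sv σ (N + k + 1) = Sv σ (N + k) + stepv (σ (N + k)) := Sv_sum_succ σ (N + k)
    have hMk : 1 ≤ Mw σ (N + k) := h _ (Nat.le_add_right N k)
    show (Mw σ (N + k + 1) : ℤ) = _
    cases hb : σ (N + k)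
    · have : Mw σ (N + k + 1) = Mw σ (N + k) + 1 := by simp [Mw, hb]
      rw [show N + (k+1) = N + k + 1 from rfl] at *
      rw [this, hs, hb]
      simp [stepv]
      push_cast
      linarith
    · have : Mw σ (N + k + 1) = Mw σ (N + k) - 1 := by simp [Mw, hb]
      rw [show N + (k+1) = N + k + 1 from rfl] at *
      rw [this, hs, hb]
      simp [stepv]
      rw [Nat.cast_sub hMk]
      push_cast
      linarith

lemma Sv_ge_neg (σ : ℕ → Bool) : ∀ n : ℕ, -(n : ℤ) ≤ Sv σ n := by
  intro n
  induction n with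
  | zero => simp [Sv]
  | succ n ih =>
    rw [Sv_sum_succ]
    have : (-1 : ℤ) ≤ stepv (σ n) := by cases σ n <;> simp [stepv]
    push_cast
    linarith

lemma Gsub : Gset ⊆ ⋃ m, Bm m := by
  intro σ h
  obtain ⟨N, hN⟩ := exists_N h
  refine mem_iUnion.2 ⟨N + Mw σ N + (Sv σ N).natAbs, fun n => ?_⟩
  rcases le_or_gt n N with hle | hlt
  · have h1 := Sv_ge_neg σ n
    have h2 : (n : ℤ) ≤ N := by exact_mod_cast hle
    have h3 : (0:ℤ) ≤ (Mw σ N : ℤ) := Int.natCast_nonneg _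
    have h4 : (0:ℤ) ≤ |Sv σ N| := abs_nonneg _
    push_cast
    linarith
  · obtain ⟨k, rfl⟩ := Nat.exists_eq_add_of_le hlt.le
    have hM := Mw_S σ N hN k
    have hge : 1 ≤ Mw σ (N + k) := hN _ (Nat.le_add_right N k)
    have h1 : (1:ℤ) ≤ (Mw σ (N + k) : ℤ) := by exact_mod_cast hge
    have h2 : -|Sv σ N| ≤ Sv σ N := neg_abs_le _
    have h3 : (0:ℤ) ≤ (N:ℤ) := Int.natCast_nonneg _
    push_cast
    linarith


section final

variable (p : Measure Bool) [IsProbabilityMeasure p]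
    (hp : ∀ b : Bool, p {b} = 1 / 2)
    (P : Measure (ℕ → Bool)) (hP : IsBernoulli p P)

include hp hP

lemma P_Bm_zero_all : ∀ m, P (Bm m) = 0 := by
  classical
  haveI : IsProbabilityMeasure P := hP.1
  have h0 : P (Bm 0) = 2⁻¹ * P (Bm 1) := by
    rw [Bm_zero]
    exact markov p hp P hP false _ (measurableSet_Bm 1)
  have hs : ∀ m, P (Bm (m + 1)) = 2⁻¹ * P (Bm (m + 2)) + 2⁻¹ * P (Bm m) := by
    intro m
    rw [Bm_succ]
    rw [measure_union ?_ ((measurableSet_eq0 true).inter (measurable_shf (measurableSet_Bm m)))]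
    · rw [markov p hp P hP false _ (measurableSet_Bm (m + 2)),
        markov p hp P hP true _ (measurableSet_Bm m)]
    · refine Set.disjoint_left.2 fun σ hσ hσ' => ?_
      have h1 : σ 0 = false := hσ.1
      have h2 : σ 0 = true := hσ'.1
      rw [h1] at h2
      exact Bool.false_ne_true h2
  set u : ℕ → ℝ := fun m => (P (Bm m)).toReal with hu
  have hfin : ∀ m, P (Bm m) ≠ ⊤ := fun m => measure_ne_top P _
  have htR : (2⁻¹ : ℝ≥0∞).toReal = 2⁻¹ := by simp
  have hu0 : u 0 = 2⁻¹ * u 1 := by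
    show (P (Bm 0)).toReal = _
    rw [h0, ENNReal.toReal_mul, htR]
  have hus : ∀ m, u (m + 1) = 2⁻¹ * u (m + 2) + 2⁻¹ * u m := by
    intro m
    show (P (Bm (m + 1))).toReal = _
    rw [hs m, ENNReal.toReal_add, ENNReal.toReal_mul, ENNReal.toReal_mul, htR]
    · exact ENNReal.mul_ne_top (by simp) (hfin _)
    · exact ENNReal.mul_ne_top (by simp) (hfin _)
  have hub : ∀ m, u m ≤ 1 := by
    intro m
    have := prob_le_one (μ := P) (s := Bm m)
    have := ENNReal.toReal_mono (by simp) this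
    simpa using this
  have hpos : ∀ m, 0 ≤ u m := fun m => ENNReal.toReal_nonneg
  have hlin : ∀ m, u (m + 1) = u m + u 0 := by
    intro m
    induction m with
    | zero => linarith [hu0]
    | succ k ih =>
      have := hus k
      linarith
  have hval : ∀ m, u m = (m + 1) * u 0 := by
    intro m
    induction m with
    | zero => ring
    | succ k ih =>
      rw [hlin k, ih]
      push_cast
      ring
  have hz : u 0 = 0 := by
    by_contra hne
    have hpos0 : 0 < u 0 := lt_of_le_of_ne (hpos 0) (Ne.symm hne)
    obtain ⟨m, hm⟩ := exists_nat_gt (1 / u 0)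
    have hb := hub m
    rw [hval m] at hb
    have : 1 / u 0 < m + 1 := by linarith
    have : 1 < (m + 1) * u 0 := by
      rw [div_lt_iff₀ hpos0] at this
      linarith
    linarith
  intro m
  have hum : u m = 0 := by rw [hval m, hz]; ring
  rcases (ENNReal.toReal_eq_zero_iff _).1 hum with h | h
  · exact h
  · exact absurd h (hfin m)

end final

end Stmt15Aux

theorem stmt15 (p : Measure Bool) [IsProbabilityMeasure p]
    (hp : ∀ b : Bool, p {b} = 1 / 2)
    (P : Measure (ℕ → Bool)) (hP : IsBernoulli p P) :
    P Gset = 0 := by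
  have hB : P (⋃ m, Stmt15Aux.Bm m) = 0 :=
    measure_iUnion_null (Stmt15Aux.P_Bm_zero_all p hp P hP)
  exact measure_mono_null Stmt15Aux.Gsub hB
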